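/- Let m : X₁ × X₂ → ℝ be a finitely supported function that is a closed 2-flow (both marginal signed measures vanish) and m ≠ 0. Then there exists a point (a₁,a₂) in the support of m with |m(a₁,a₂)| minimal among nonzero values, and a finite sequence of distinct edges alternating in the first and second coordinate, starting at (a₁,a₂), all in the support of m with alternating signs of m of absolute value at least |m(a₁,a₂)|, which eventually revisits a previously visited vertex, yielding a nonzero 2-flow-loop [A'] such that [A'] and m − [A'] form a decomposition of m without cancellations (|m| = |[A']| + |m − [A']| where |·| is the sum of absolute values of coefficients). -/

import Mathlib

section TwoFlows

variable {X₁ X₂ : Type*} [DecidableEq X₁] [DecidableEq X₂]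

/-- Total mass of a finitely supported flow. -/
def flowMass (m : (X₁ × X₂) →₀ ℝ) : ℝ := ∑ p ∈ m.support, |m p|

/-- A finitely supported 2-flow is closed if both marginal signed measures vanish. -/
def IsClosed2Flow (m : (X₁ × X₂) →₀ ℝ) : Prop :=
  (∀ v : X₁, ∑ p ∈ m.support, (if p.1 = v then m p else 0) = 0) ∧
  (∀ v : X₂, ∑ p ∈ m.support, (if p.2 = v then m p else 0) = 0)

/-- A 2-flow-loop: a closed flow supported on a cyclic alternating sequence of
edges `(a_j, b_j), (a_{j+1}, b_j)` with constant-absolute-value coefficients. -/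
def IsTwoFlowLoop (L : (X₁ × X₂) →₀ ℝ) : Prop :=
  ∃ (n : ℕ) (w : ℝ), w ≠ 0 ∧ ∃ (a : Fin (n+1) → X₁) (b : Fin (n+1) → X₂),
    Function.Injective a ∧ Function.Injective b ∧
    L = w • ∑ j : Fin (n+1),
      (Finsupp.single (a j, b j) (1 : ℝ) - Finsupp.single (a (j + 1), b j) (1 : ℝ))

def FlowStep (m : (X₁ × X₂) →₀ ℝ) (u v : X₁ × X₂) : Prop :=
  (0 < m u ∧ m v < 0 ∧ u.2 = v.2) ∨ (m u < 0 ∧ 0 < m v ∧ u.1 = v.1)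

lemma exists_flow_cycle (m : (X₁ × X₂) →₀ ℝ) (hclosed : IsClosed2Flow m)
    (p : X₁ × X₂) (hpos : 0 < m p) :
    Relation.TransGen (FlowStep m) p p := by
  classical
  set S := m.support with hS
  set R : (X₁ × X₂) → Prop := Relation.ReflTransGen (FlowStep m) p with hR
  set A : Finset X₁ := (S.filter fun q => m q < 0 ∧ R q).image Prod.fst with hA
  set B : Finset X₂ := (S.filter fun q => 0 < m q ∧ R q).image Prod.snd with hB
  have hpS : p ∈ S := Finsupp.mem_support_iff.mpr (ne_of_gt hpos)
  -- membership facts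
  have factA : ∀ q : X₁ × X₂, q.1 ∈ A → 0 < m q → R q := by
    intro q hq hqpos
    rw [hA] at hq
    obtain ⟨q', hq', hq'1⟩ := Finset.mem_image.mp hq
    obtain ⟨-, hq'neg, hq'R⟩ := Finset.mem_filter.mp hq'
    exact hq'R.tail (Or.inr ⟨hq'neg, hqpos, hq'1⟩)
  have factB : ∀ q : X₁ × X₂, q.2 ∈ B → m q < 0 → R q := by
    intro q hq hqneg
    rw [hB] at hq
    obtain ⟨q', hq', hq'2⟩ := Finset.mem_image.mp hq
    obtain ⟨-, hq'pos, hq'R⟩ := Finset.mem_filter.mp hq'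
    exact hq'R.tail (Or.inl ⟨hq'pos, hqneg, hq'2⟩)
  have memA : ∀ q : X₁ × X₂, q ∈ S → m q < 0 → R q → q.1 ∈ A := by
    intro q hqS hqneg hqR
    exact Finset.mem_image.mpr ⟨q, Finset.mem_filter.mpr ⟨hqS, hqneg, hqR⟩, rfl⟩
  have memB : ∀ q : X₁ × X₂, q ∈ S → 0 < m q → R q → q.2 ∈ B := by
    intro q hqS hqpos hqR
    exact Finset.mem_image.mpr ⟨q, Finset.mem_filter.mpr ⟨hqS, hqpos, hqR⟩, rfl⟩
  -- sums over rows in A and columns in B vanish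
  have sumA : ∑ q ∈ S.filter (fun q => q.1 ∈ A), m q = 0 := by
    rw [← Finset.sum_fiberwise_eq_sum_filter S A Prod.fst m]
    refine Finset.sum_eq_zero fun v _ => ?_
    rw [Finset.sum_filter]
    exact hclosed.1 v
  have sumB : ∑ q ∈ S.filter (fun q => q.2 ∈ B), m q = 0 := by
    rw [← Finset.sum_fiberwise_eq_sum_filter S B Prod.snd m]
    refine Finset.sum_eq_zero fun v _ => ?_
    rw [Finset.sum_filter]
    exact hclosed.2 v
  -- split into positive and negative parts
  set TAp := (S.filter (fun q => q.1 ∈ A)).filter (fun q => 0 < m q) with hTAp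
  set TAn := (S.filter (fun q => q.1 ∈ A)).filter (fun q => ¬ 0 < m q) with hTAn
  set TBp := (S.filter (fun q => q.2 ∈ B)).filter (fun q => 0 < m q) with hTBp
  set TBn := (S.filter (fun q => q.2 ∈ B)).filter (fun q => ¬ 0 < m q) with hTBn
  have hsplitA : (∑ q ∈ TAp, m q) + (∑ q ∈ TAn, m q) = 0 := by
    rw [hTAp, hTAn, Finset.sum_filter_add_sum_filter_not]; exact sumA
  have hsplitB : (∑ q ∈ TBp, m q) + (∑ q ∈ TBn, m q) = 0 := by
    rw [hTBp, hTBn, Finset.sum_filter_add_sum_filter_not]; exact sumB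
  have hneg_of_mem : ∀ q : X₁ × X₂, q ∈ S → ¬ 0 < m q → m q < 0 := by
    intro q hq hnot
    rcases lt_trichotomy (m q) 0 with h | h | h
    · exact h
    · exact absurd h (Finsupp.mem_support_iff.mp hq)
    · exact absurd h hnot
  -- subset relations
  have hsub1 : TAp ⊆ TBp := by
    intro q hq
    rw [hTAp, Finset.mem_filter, Finset.mem_filter] at hq
    obtain ⟨⟨hqS, hq1⟩, hqpos⟩ := hq
    refine Finset.mem_filter.mpr ⟨Finset.mem_filter.mpr ⟨hqS, ?_⟩, hqpos⟩
    exact memB q hqS hqpos (factA q hq1 hqpos)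
  have hsub2 : TBn ⊆ TAn := by
    intro q hq
    rw [hTBn, Finset.mem_filter, Finset.mem_filter] at hq
    obtain ⟨⟨hqS, hq2⟩, hqnpos⟩ := hq
    have hqneg := hneg_of_mem q hqS hqnpos
    refine Finset.mem_filter.mpr ⟨Finset.mem_filter.mpr ⟨hqS, ?_⟩, hqnpos⟩
    exact memA q hqS hqneg (factB q hq2 hqneg)
  -- inequalities
  have hle1 : ∑ q ∈ TAp, m q ≤ ∑ q ∈ TBp, m q := by
    refine Finset.sum_le_sum_of_subset_of_nonneg hsub1 fun q hq _ => ?_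
    exact le_of_lt (Finset.mem_filter.mp hq).2
  have hle2 : ∑ q ∈ TAn, m q ≤ ∑ q ∈ TBn, m q := by
    have h : ∑ q ∈ TBn, -(m q) ≤ ∑ q ∈ TAn, -(m q) := by
      refine Finset.sum_le_sum_of_subset_of_nonneg hsub2 fun q hq _ => ?_
      have := hneg_of_mem q (Finset.mem_filter.mp (Finset.mem_filter.mp hq).1).1
        (Finset.mem_filter.mp hq).2
      linarith
    rw [Finset.sum_neg_distrib, Finset.sum_neg_distrib] at h
    linarith
  have heq : ∑ q ∈ TAp, m q = ∑ q ∈ TBp, m q := by linarith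
  -- p belongs to TBp
  have hpB : p ∈ TBp := by
    refine Finset.mem_filter.mpr ⟨Finset.mem_filter.mpr ⟨hpS, ?_⟩, hpos⟩
    exact memB p hpS hpos Relation.ReflTransGen.refl
  -- p must belong to TAp, otherwise strict inequality
  have hpA : p ∈ TAp := by
    by_contra hnot
    have : ∑ q ∈ TAp, m q < ∑ q ∈ TBp, m q := by
      refine Finset.sum_lt_sum_of_subset hsub1 hpB hnot hpos fun q hq _ => ?_
      exact le_of_lt (Finset.mem_filter.mp hq).2
    linarith
  -- extract the incoming negative edge in row p.1
  have hp1A : p.1 ∈ A := (Finset.mem_filter.mp (Finset.mem_filter.mp hpA).1).2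
  rw [hA] at hp1A
  obtain ⟨q', hq', hq'1⟩ := Finset.mem_image.mp hp1A
  obtain ⟨-, hq'neg, hq'R⟩ := Finset.mem_filter.mp hq'
  exact Relation.TransGen.tail' hq'R (Or.inr ⟨hq'neg, hpos, hq'1⟩)


lemma flowMass_eq_sum (f : (X₁ × X₂) →₀ ℝ) (T : Finset (X₁ × X₂))
    (h : f.support ⊆ T) : flowMass f = ∑ q ∈ T, |f q| := by
  unfold flowMass
  refine Finset.sum_subset h fun q _ hq => ?_
  rw [Finsupp.notMem_support_iff.mp hq, abs_zero]

lemma core (m : (X₁ × X₂) →₀ ℝ) (hclosed : IsClosed2Flow m)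
    (p : X₁ × X₂) (hp : p ∈ m.support)
    (hmin : ∀ q ∈ m.support, |m p| ≤ |m q|) (hpos : 0 < m p) :
    ∃ L : (X₁ × X₂) →₀ ℝ, IsTwoFlowLoop L ∧ L ≠ 0 ∧
      p ∈ L.support ∧ (∀ x ∈ L.support, x ∈ m.support) ∧
      (∀ x ∈ L.support, |L x| = |m p|) ∧
      flowMass m = flowMass L + flowMass (m - L) := by
  classical
  have htg := exists_flow_cycle m hclosed p hpos
  set W : ℕ → Prop := fun N => 1 ≤ N ∧ ∃ e : ℕ → X₁ × X₂,
      e 0 = p ∧ e N = p ∧ ∀ i < N, FlowStep m (e i) (e (i+1)) with hW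
  have key : ∀ q, Relation.TransGen (FlowStep m) p q →
      ∃ N, 1 ≤ N ∧ ∃ e : ℕ → X₁ × X₂, e 0 = p ∧ e N = q ∧
        ∀ i < N, FlowStep m (e i) (e (i+1)) := by
    intro q h
    induction h with
    | single h =>
      rename_i c
      refine ⟨1, le_refl 1, fun i => if i = 0 then p else c, by simp, by simp, ?_⟩
      intro i hi
      have : i = 0 := by omega
      subst this
      simpa using h
    | tail hab hbc ih =>
      rename_i bb cc
      obtain ⟨N, hN, e, he0, heN, hstep⟩ := ih
      refine ⟨N+1, by omega, fun i => if i ≤ N then e i else cc, ?_, ?_, ?_⟩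
      · beta_reduce
        rw [if_pos (Nat.zero_le N)]; exact he0
      · beta_reduce
        rw [if_neg (by omega)]
      · intro i hi
        beta_reduce
        by_cases hiN : i < N
        · rw [if_pos (by omega : i ≤ N), if_pos (by omega : i + 1 ≤ N)]
          exact hstep i hiN
        · have : i = N := by omega
          subst this
          rw [if_pos le_rfl, if_neg (by omega), heN]
          exact hbc
  have hWex : ∃ N, W N := by
    obtain ⟨N, h1, he⟩ := key p htg
    exact ⟨N, h1, he⟩
  set N₀ := Nat.find hWex with hN₀def
  obtain ⟨hN1, e, he0, heN, hstep⟩ : W N₀ := Nat.find_spec hWex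
  have hminN : ∀ k, k < N₀ → ¬ W k := fun k hk => Nat.find_min hWex hk
  -- signs along the walk
  have hsign : ∀ i, i ≤ N₀ → (Even i → 0 < m (e i)) ∧ (¬ Even i → m (e i) < 0) := by
    intro i
    induction i with
    | zero =>
      intro _
      exact ⟨fun _ => by rw [he0]; exact hpos, fun h => absurd Even.zero h⟩
    | succ i ih =>
      intro hi
      have hii : i ≤ N₀ := by omega
      have hst := hstep i (by omega)
      by_cases hpar : Even i
      · have hpos' := (ih hii).1 hpar
        rcases hst with ⟨_, hv, _⟩ | ⟨hu, _, _⟩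
        · exact ⟨fun h => absurd (Nat.even_add_one.mp h) (by simpa using hpar),
            fun _ => hv⟩
        · linarith
      · have hneg' := (ih hii).2 hpar
        rcases hst with ⟨hu, _, _⟩ | ⟨_, hv, _⟩
        · linarith
        · exact ⟨fun _ => hv, fun h => absurd (Nat.even_add_one.mpr hpar) h⟩
  have heven : Even N₀ := by
    by_contra h
    have := (hsign N₀ le_rfl).2 h
    rw [heN] at this; linarith
  obtain ⟨k, hk⟩ := heven
  have hk2 : N₀ = 2*k := by omega
  have hkge : 2 ≤ k := by
    rcases Nat.lt_or_ge k 2 with hlt | hge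
    · exfalso
      have hk1 : k = 1 := by omega
      have h2 : N₀ = 2 := by omega
      have hst0 := hstep 0 (by omega)
      have hst1 := hstep 1 (by omega)
      rw [he0] at hst0
      have hneg1 : m (e 1) < 0 := (hsign 1 (by omega)).2 (by simp)
      have hcol : p.2 = (e 1).2 := by
        rcases hst0 with ⟨_, _, h⟩ | ⟨h, _, _⟩
        · exact h
        · linarith
      have hrow : (e 1).1 = p.1 := by
        rcases hst1 with ⟨h, _, _⟩ | ⟨_, _, h⟩
        · linarith
        · rw [h]
          have : (1:ℕ) + 1 = N₀ := by omega
          rw [this, heN]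
      have : e 1 = p := Prod.ext hrow hcol.symm
      rw [this] at hneg1; linarith
    · exact hge
  obtain ⟨n, hkn⟩ : ∃ n, k = n + 1 := ⟨k - 1, by omega⟩
  have hn1 : 1 ≤ n := by omega
  have hN₀eq : N₀ = 2*n + 2 := by omega
  -- the shortcut lemma: no shorter closed walk exists
  have hshort : ∀ c Δ : ℕ, 1 ≤ c → 1 ≤ Δ → c + Δ ≤ N₀ →
      FlowStep m (e (c-1)) (e (c+Δ)) → False := by
    intro c Δ hc hΔ hcΔ hstc
    refine hminN (N₀ - Δ) (by omega) ⟨by omega,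
      fun i => if i < c then e i else e (i + Δ), ?_, ?_, ?_⟩
    · beta_reduce
      rw [if_pos (by omega : 0 < c)]; exact he0
    · beta_reduce
      rw [if_neg (by omega : ¬ N₀ - Δ < c)]
      have h1 : N₀ - Δ + Δ = N₀ := by omega
      rw [h1]; exact heN
    · intro i hi
      beta_reduce
      by_cases h1 : i + 1 < c
      · rw [if_pos (by omega : i < c), if_pos h1]; exact hstep i (by omega)
      · by_cases h2 : i + 1 = c
        · rw [if_pos (by omega : i < c), if_neg (by omega : ¬ i + 1 < c)]
          have e1 : i = c - 1 := by omega
          have e2 : i + 1 + Δ = c + Δ := by omega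
          rw [e2, e1]; exact hstc
        · rw [if_neg (by omega : ¬ i < c), if_neg (by omega : ¬ i + 1 < c)]
          have e2 : i + 1 + Δ = (i + Δ) + 1 := by omega
          rw [e2]; exact hstep (i + Δ) (by omega)
  -- sign and coordinate facts for even/odd positions
  have hEpos : ∀ j : ℕ, 2*j ≤ N₀ → 0 < m (e (2*j)) := fun j h =>
    (hsign (2*j) h).1 (even_two_mul j)
  have hEneg : ∀ j : ℕ, 2*j + 1 ≤ N₀ → m (e (2*j+1)) < 0 := fun j h =>
    (hsign (2*j+1) h).2 (by simp [Nat.even_add_one])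
  have hEcol : ∀ j : ℕ, 2*j + 1 ≤ N₀ → (e (2*j)).2 = (e (2*j+1)).2 := by
    intro j h
    rcases hstep (2*j) (by omega) with ⟨_, _, hc⟩ | ⟨hu, _, _⟩
    · exact hc
    · exact absurd hu (by linarith [hEpos j (by omega)])
  have hErow : ∀ j : ℕ, 2*j + 2 ≤ N₀ → (e (2*j+1)).1 = (e (2*j+2)).1 := by
    intro j h
    rcases hstep (2*j+1) (by omega) with ⟨hu, _, _⟩ | ⟨_, _, hr⟩
    · linarith [hEneg j (by omega)]
    · exact hr
  set a : Fin (n+1) → X₁ := fun j => (e (2*j.val)).1 with ha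
  set b : Fin (n+1) → X₂ := fun j => (e (2*j.val)).2 with hb
  have hjb : ∀ j : Fin (n+1), 2*j.val + 2 ≤ N₀ := fun j => by
    have := j.isLt; omega
  have ha1 : ∀ j : Fin (n+1), a (j+1) = (e (2*j.val+1)).1 := by
    intro j
    rw [hErow j.val (hjb j)]
    by_cases hj : j.val = n
    · have hv : (j + 1 : Fin (n+1)).val = 0 := by
        rw [Fin.val_add_one, if_pos (Fin.ext hj)]
      show (e (2*(j+1 : Fin (n+1)).val)).1 = (e (2*j.val+2)).1
      rw [hv]
      have h2 : 2*j.val + 2 = N₀ := by omega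
      norm_num [h2, he0, heN]
    · have hv : (j + 1 : Fin (n+1)).val = j.val + 1 := by
        rw [Fin.val_add_one, if_neg (by simp [Fin.ext_iff]; omega)]
      show (e (2*(j+1 : Fin (n+1)).val)).1 = (e (2*j.val+2)).1
      rw [hv]
      have h2 : 2*(j.val+1) = 2*j.val + 2 := by ring
      rw [h2]
  have hedge1 : ∀ j : Fin (n+1), (a j, b j) = e (2*j.val) := fun j => Prod.mk.eta
  have hedge2 : ∀ j : Fin (n+1), (a (j+1), b j) = e (2*j.val+1) := by
    intro j
    rw [ha1 j]
    show ((e (2*j.val+1)).1, (e (2*j.val)).2) = e (2*j.val+1)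
    rw [hEcol j.val (by have := hjb j; omega)]
  have hm1 : ∀ j : Fin (n+1), 0 < m (a j, b j) := fun j => by
    rw [hedge1]; exact hEpos j.val (by have := hjb j; omega)
  have hm2 : ∀ j : Fin (n+1), m (a (j+1), b j) < 0 := fun j => by
    rw [hedge2]; exact hEneg j.val (by have := hjb j; omega)
  -- injectivity
  have inja' : ∀ i j : Fin (n+1), i.val < j.val → a i ≠ a j := by
    intro i j hij heq
    have hjlt := j.isLt
    by_cases hi0 : i.val = 0
    · obtain ⟨t, ht⟩ : ∃ t, j.val = t + 1 := ⟨j.val - 1, by omega⟩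
      refine hshort (2*t+2) (N₀ - (2*t+2)) (by omega) (by omega) (by omega) ?_
      have harith : 2*t+2 + (N₀ - (2*t+2)) = N₀ := by omega
      have h1 : 2*t+2-1 = 2*t+1 := by omega
      rw [harith, h1, heN]
      refine Or.inr ⟨hEneg t (by omega), hpos, ?_⟩
      rw [hErow t (by omega)]
      have h2 : 2*t+2 = 2*j.val := by omega
      rw [h2]
      show a j = p.1
      rw [← heq]
      show (e (2*i.val)).1 = p.1
      rw [hi0]
      norm_num [he0]
    · obtain ⟨s, hs⟩ : ∃ s, i.val = s + 1 := ⟨i.val - 1, by omega⟩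
      refine hshort (2*s+2) (2*(j.val - i.val)) (by omega) (by omega) (by omega) ?_
      have h1 : 2*s+2-1 = 2*s+1 := by omega
      have h2 : 2*s+2 + 2*(j.val - i.val) = 2*j.val := by omega
      rw [h1, h2]
      refine Or.inr ⟨hEneg s (by omega), hEpos j.val (by omega), ?_⟩
      rw [hErow s (by omega)]
      have h3 : 2*s+2 = 2*i.val := by omega
      rw [h3]
      exact heq
  have inja : Function.Injective a := by
    intro i j h
    rcases lt_trichotomy i.val j.val with hlt | heqv | hgt
    · exact absurd h (inja' i j hlt)
    · exact Fin.ext heqv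
    · exact absurd h.symm (inja' j i hgt)
  have injb' : ∀ i j : Fin (n+1), i.val < j.val → b i ≠ b j := by
    intro i j hij heq
    have hjlt := j.isLt
    refine hshort (2*i.val+1) (2*(j.val - i.val)) (by omega) (by omega) (by omega) ?_
    have h1 : 2*i.val+1-1 = 2*i.val := by omega
    have h2 : 2*i.val+1 + 2*(j.val - i.val) = 2*j.val+1 := by omega
    rw [h1, h2]
    refine Or.inl ⟨hEpos i.val (by omega), hEneg j.val (by omega), ?_⟩
    rw [← hEcol j.val (by omega)]
    exact heq
  have injb : Function.Injective b := by
    intro i j h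
    rcases lt_trichotomy i.val j.val with hlt | heqv | hgt
    · exact absurd h (injb' i j hlt)
    · exact Fin.ext heqv
    · exact absurd h.symm (injb' j i hgt)
  -- the loop
  set L : (X₁ × X₂) →₀ ℝ := m p • ∑ j : Fin (n+1),
      (Finsupp.single (a j, b j) (1:ℝ) - Finsupp.single (a (j+1), b j) (1:ℝ)) with hL
  have hloop : IsTwoFlowLoop L := ⟨n, m p, ne_of_gt hpos, a, b, inja, injb, hL⟩
  have hne10 : (1 : Fin (n+1)) ≠ 0 := by
    intro h
    have h1 : (1 : Fin (n+1)).val = 0 := by rw [h]; rfl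
    rw [Fin.val_one'] at h1
    have : 1 % (n+1) = 1 := Nat.mod_eq_of_lt (by omega)
    omega
  have hdisj : ∀ i j : Fin (n+1), (a i, b i) ≠ (a (j+1), b j) := by
    intro i j h
    rw [Prod.mk.injEq] at h
    obtain ⟨h1, h2⟩ := h
    have hij : i = j := injb h2
    subst hij
    have h3 : i = i + 1 := inja h1
    exact hne10 (left_eq_add.mp h3)
  have hsum_ind : ∀ (u : Fin (n+1) → X₁ × X₂), Function.Injective u → ∀ q,
      (∑ j : Fin (n+1), if u j = q then (1:ℝ) else 0)
        = if ∃ j, u j = q then 1 else 0 := by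
    intro u hu q
    by_cases h : ∃ j, u j = q
    · obtain ⟨j₀, hj₀⟩ := h
      rw [if_pos ⟨j₀, hj₀⟩,
        Finset.sum_eq_single_of_mem j₀ (Finset.mem_univ _)
          (fun j _ hne => if_neg fun hc => hne (hu (hc.trans hj₀.symm))),
        if_pos hj₀]
    · rw [if_neg h]
      exact Finset.sum_eq_zero fun j _ => if_neg fun hc => h ⟨j, hc⟩
  have hu1 : Function.Injective (fun j : Fin (n+1) => (a j, b j)) := by
    intro i j h
    simp only [Prod.mk.injEq] at h
    exact injb h.2
  have hu2 : Function.Injective (fun j : Fin (n+1) => (a (j+1), b j)) := by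
    intro i j h
    simp only [Prod.mk.injEq] at h
    exact injb h.2
  have hLval : ∀ q, L q = if ∃ j, (a j, b j) = q then m p
      else if ∃ j, (a (j+1), b j) = q then -(m p) else 0 := by
    intro q
    rw [hL, Finsupp.smul_apply, Finsupp.finset_sum_apply]
    have hterm : ∀ j : Fin (n+1), j ∈ Finset.univ →
        (Finsupp.single (a j, b j) (1:ℝ) - Finsupp.single (a (j+1), b j) (1:ℝ)) q
        = (if (a j, b j) = q then (1:ℝ) else 0)
          - (if (a (j+1), b j) = q then (1:ℝ) else 0) := by
      intro j _
      rw [Finsupp.sub_apply, Finsupp.single_apply, Finsupp.single_apply]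
    rw [Finset.sum_congr rfl hterm, Finset.sum_sub_distrib,
      hsum_ind _ hu1 q, hsum_ind _ hu2 q]
    by_cases h1 : ∃ j, (a j, b j) = q
    · have h2 : ¬ ∃ j, (a (j+1), b j) = q := by
        rintro ⟨j, hj⟩
        obtain ⟨j', hj'⟩ := h1
        exact hdisj j' j (hj'.trans hj.symm)
      rw [if_pos h1, if_neg h2, if_pos h1]
      simp
    · rw [if_neg h1, if_neg h1]
      by_cases h2 : ∃ j, (a (j+1), b j) = q
      · rw [if_pos h2, if_pos h2]
        simp only [smul_eq_mul]; ring
      · rw [if_neg h2, if_neg h2]; simp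
  have h0p : (a 0, b 0) = p := by
    rw [hedge1 0]
    simpa using he0
  have hLp : L p = m p := by
    rw [hLval p, if_pos ⟨0, h0p⟩]
  have hsupp : ∀ x ∈ L.support, x ∈ m.support := by
    intro x hx
    rw [Finsupp.mem_support_iff] at hx ⊢
    rw [hLval x] at hx
    by_cases h1 : ∃ j, (a j, b j) = x
    · obtain ⟨j, hj⟩ := h1
      rw [← hj]
      exact ne_of_gt (hm1 j)
    · rw [if_neg h1] at hx
      by_cases h2 : ∃ j, (a (j+1), b j) = x
      · obtain ⟨j, hj⟩ := h2
        rw [← hj]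
        exact ne_of_lt (hm2 j)
      · rw [if_neg h2] at hx
        exact absurd rfl hx
  have habs_all : ∀ x ∈ L.support, |L x| = |m p| := by
    intro x hx
    rw [Finsupp.mem_support_iff, hLval x] at hx
    rw [hLval x]
    by_cases h1 : ∃ j, (a j, b j) = x
    · rw [if_pos h1]
    · rw [if_neg h1] at hx ⊢
      by_cases h2 : ∃ j, (a (j+1), b j) = x
      · rw [if_pos h2, abs_neg]
      · rw [if_neg h2] at hx
        exact absurd rfl hx
  have hmp_abs : |m p| = m p := abs_of_pos hpos
  have hptwise : ∀ q, |m q| = |L q| + |m q - L q| := by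
    intro q
    rw [hLval q]
    by_cases h1 : ∃ j, (a j, b j) = q
    · rw [if_pos h1]
      obtain ⟨j, hj⟩ := h1
      have hq : 0 < m q := hj ▸ hm1 j
      have h := hmin q (Finsupp.mem_support_iff.mpr (ne_of_gt hq))
      rw [hmp_abs, abs_of_pos hq] at h
      rw [abs_of_pos hq, abs_of_pos hpos,
        abs_of_nonneg (by linarith : (0:ℝ) ≤ m q - m p)]
      ring
    · rw [if_neg h1]
      by_cases h2 : ∃ j, (a (j+1), b j) = q
      · rw [if_pos h2]
        obtain ⟨j, hj⟩ := h2
        have hq : m q < 0 := hj ▸ hm2 j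
        have h := hmin q (Finsupp.mem_support_iff.mpr (ne_of_lt hq))
        rw [hmp_abs, abs_of_neg hq] at h
        rw [abs_of_neg hq, abs_neg, abs_of_pos hpos,
          abs_of_nonpos (by linarith : m q - -(m p) ≤ 0)]
        ring
      · rw [if_neg h2]; simp
  have hLsub : L.support ⊆ m.support := fun x hx => hsupp x hx
  have hsubsub : (m - L).support ⊆ m.support := by
    refine subset_trans Finsupp.support_sub ?_
    intro x hx
    rcases Finset.mem_union.mp hx with h | h
    · exact h
    · exact hLsub h
  have hmass : flowMass m = flowMass L + flowMass (m - L) := by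
    rw [flowMass_eq_sum L m.support hLsub, flowMass_eq_sum (m - L) m.support hsubsub,
      ← Finset.sum_add_distrib]
    refine Finset.sum_congr rfl fun q _ => ?_
    rw [Finsupp.sub_apply]
    exact hptwise q
  refine ⟨L, hloop, ?_, Finsupp.mem_support_iff.mpr (by rw [hLp]; exact ne_of_gt hpos),
    hsupp, habs_all, hmass⟩
  intro h
  rw [h] at hLp
  simp only [Finsupp.coe_zero, Pi.zero_apply] at hLp
  linarith


lemma flowMass_neg (f : (X₁ × X₂) →₀ ℝ) : flowMass (-f) = flowMass f := by
  unfold flowMass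
  rw [Finsupp.support_neg]
  exact Finset.sum_congr rfl fun q _ => by rw [Finsupp.neg_apply, abs_neg]

theorem stmt13 (m : (X₁ × X₂) →₀ ℝ) (hclosed : IsClosed2Flow m) (hne : m ≠ 0) :
    ∃ p ∈ m.support, (∀ q ∈ m.support, |m p| ≤ |m q|) ∧
      ∃ L : (X₁ × X₂) →₀ ℝ, IsTwoFlowLoop L ∧ L ≠ 0 ∧
        p ∈ L.support ∧ (∀ x ∈ L.support, x ∈ m.support) ∧
        (∀ x ∈ L.support, |L x| = |m p|) ∧
        flowMass m = flowMass L + flowMass (m - L) := by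
  classical
  obtain ⟨p, hp, hmin⟩ := Finset.exists_min_image m.support (fun q => |m q|)
    (Finsupp.support_nonempty_iff.mpr hne)
  refine ⟨p, hp, hmin, ?_⟩
  have hpne : m p ≠ 0 := Finsupp.mem_support_iff.mp hp
  rcases hpne.lt_or_gt with hneg | hpos
  · have hclosed' : IsClosed2Flow (-m) := by
      constructor
      · intro v
        rw [Finsupp.support_neg]
        calc ∑ q ∈ m.support, (if q.1 = v then (-m) q else 0)
            = ∑ q ∈ m.support, -(if q.1 = v then m q else 0) :=
              Finset.sum_congr rfl fun q _ => by by_cases h : q.1 = v <;> simp [h]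
          _ = 0 := by rw [Finset.sum_neg_distrib, hclosed.1 v, neg_zero]
      · intro v
        rw [Finsupp.support_neg]
        calc ∑ q ∈ m.support, (if q.2 = v then (-m) q else 0)
            = ∑ q ∈ m.support, -(if q.2 = v then m q else 0) :=
              Finset.sum_congr rfl fun q _ => by by_cases h : q.2 = v <;> simp [h]
          _ = 0 := by rw [Finset.sum_neg_distrib, hclosed.2 v, neg_zero]
    have hp' : p ∈ (-m).support := by rw [Finsupp.support_neg]; exact hp
    have hmin' : ∀ q ∈ (-m).support, |(-m) p| ≤ |(-m) q| := by
      intro q hq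
      rw [Finsupp.support_neg] at hq
      simp only [Finsupp.neg_apply, abs_neg]
      exact hmin q hq
    have hpos' : 0 < (-m) p := by rw [Finsupp.neg_apply]; linarith
    obtain ⟨L', hloop', hLne', hpL', hsupp', habs', hmass'⟩ :=
      core (-m) hclosed' p hp' hmin' hpos'
    refine ⟨-L', ?_, neg_ne_zero.mpr hLne', ?_, ?_, ?_, ?_⟩
    · obtain ⟨n, w, hw, a, b, ia, ib, hEq⟩ := hloop'
      exact ⟨n, -w, neg_ne_zero.mpr hw, a, b, ia, ib, by rw [hEq, neg_smul]⟩
    · rw [Finsupp.support_neg]; exact hpL'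
    · intro x hx
      rw [Finsupp.support_neg] at hx
      have h := hsupp' x hx
      rw [Finsupp.support_neg] at h
      exact h
    · intro x hx
      rw [Finsupp.support_neg] at hx
      rw [Finsupp.neg_apply, abs_neg]
      have h := habs' x hx
      rw [Finsupp.neg_apply, abs_neg] at h
      exact h
    · have h1 : flowMass (m - -L') = flowMass (-m - L') := by
        rw [← flowMass_neg (m - -L')]
        congr 1
        abel
      rw [flowMass_neg L', h1, ← flowMass_neg m]
      exact hmass'
  · exact core m hclosed p hp hmin hpos

end TwoFlows
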